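/- Let m, n, p be positive integers, δ ≥ 0 a real number, L, U ∈ ℝ^p, and let q ∈ [0,1]^{m×p} satisfy ∑_{ℓ=1}^p q_{iℓ} = 1 for every i ∈ {1,…,m}. Consider the polytope P := {x ∈ ℝ^m : 0 ≤ x_i ≤ 1 for all i, ∑_{i=1}^m x_i = n, and for all ℓ ∈ {1,…,p}, L_ℓ − δn ≤ ∑_{i=1}^m q_{iℓ} x_i ≤ U_ℓ + δn}. Then every extreme point x of P has at most min(m, p) fractional coordinates, i.e., #{i : 0 < x_i < 1} ≤ min(m, p). -/

import Mathlib

/-- **Extreme points of the denoised LP polytope have at most `min m p` fractional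
coordinates (one protected attribute).** -/
theorem stmt3 (m n p : ℕ) (hm : 0 < m) (hn : 0 < n) (hp : 0 < p)
    (δ : ℝ) (hδ : 0 ≤ δ) (L U : Fin p → ℝ)
    (q : Fin m → Fin p → ℝ) (hq : ∀ i ℓ, q i ℓ ∈ Set.Icc (0 : ℝ) 1)
    (hqsum : ∀ i, ∑ ℓ, q i ℓ = 1)
    (P : Set (Fin m → ℝ))
    (hP : P = {x | (∀ i, 0 ≤ x i ∧ x i ≤ 1) ∧ (∑ i, x i = (n : ℝ)) ∧
      ∀ ℓ, L ℓ - δ * n ≤ ∑ i, q i ℓ * x i ∧ ∑ i, q i ℓ * x i ≤ U ℓ + δ * n})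
    (x : Fin m → ℝ) (hx : x ∈ Set.extremePoints ℝ P) :
    {i | 0 < x i ∧ x i < 1}.ncard ≤ min m p := by
  classical
  by_contra hcon
  push_neg at hcon
  set F : Finset (Fin m) := Finset.univ.filter (fun i => 0 < x i ∧ x i < 1) with hFdef
  have hset : {i | 0 < x i ∧ x i < 1} = ↑F := by
    ext i; simp [hFdef]
  rw [hset, Set.ncard_coe_finset] at hcon
  have hFm : F.card ≤ m := by simpa using F.card_le_univ
  have hple : p < F.card := by omega
  have hFmem : ∀ i ∈ F, 0 < x i ∧ x i < 1 := by
    intro i hi; simpa [hFdef] using hi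
  -- the linear map on the fractional coordinates
  let g : ({i // i ∈ F} → ℝ) →ₗ[ℝ] (Fin p → ℝ) :=
    { toFun := fun v ℓ => ∑ i : {i // i ∈ F}, q i ℓ * v i
      map_add' := by
        intro a b; funext ℓ
        simp [mul_add, Finset.sum_add_distrib]
      map_smul' := by
        intro c a; funext ℓ
        simp [Finset.mul_sum, mul_comm, mul_left_comm] }
  have hnotinj : ¬ Function.Injective g := by
    intro hinj
    have h := LinearMap.finrank_le_finrank_of_injective hinj
    rw [Module.finrank_fintype_fun_eq_card, Module.finrank_fintype_fun_eq_card] at h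
    simp [Fintype.card_coe] at h
    omega
  have hker : LinearMap.ker g ≠ ⊥ := by
    intro h
    exact hnotinj (LinearMap.ker_eq_bot.mp h)
  obtain ⟨v, hv0, hvne⟩ := Submodule.exists_mem_ne_zero_of_ne_bot hker
  have hgv : ∀ ℓ, ∑ i : {i // i ∈ F}, q i ℓ * v i = 0 := by
    intro ℓ
    have : g v = 0 := hv0
    exact congrFun this ℓ
  -- the perturbation direction
  set d : Fin m → ℝ := fun i => if h : i ∈ F then v ⟨i, h⟩ else 0 with hddef
  have hd_out : ∀ i, i ∉ F → d i = 0 := by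
    intro i hi; simp [hddef, hi]
  have hAd : ∀ ℓ, ∑ i, q i ℓ * d i = 0 := by
    intro ℓ
    have h1 : ∑ i ∈ F, q i ℓ * d i = ∑ i, q i ℓ * d i :=
      Finset.sum_subset F.subset_univ (fun i _ hi => by simp [hd_out i hi])
    have h2 : ∑ i ∈ F, q i ℓ * d i = ∑ i : {i // i ∈ F}, q (i : Fin m) ℓ * d i :=
      (Finset.sum_coe_sort F (fun i => q i ℓ * d i)).symm
    have h3 : ∑ i : {i // i ∈ F}, q (i : Fin m) ℓ * d i
        = ∑ i : {i // i ∈ F}, q (i : Fin m) ℓ * v i := by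
      apply Finset.sum_congr rfl
      intro i _
      simp [hddef, i.2]
    rw [← h1, h2, h3, hgv ℓ]
  have hsumd : ∑ i, d i = 0 := by
    calc ∑ i, d i = ∑ i, (∑ ℓ, q i ℓ) * d i := by
          apply Finset.sum_congr rfl; intro i _; rw [hqsum i, one_mul]
      _ = ∑ i, ∑ ℓ, q i ℓ * d i := by
          apply Finset.sum_congr rfl; intro i _; rw [Finset.sum_mul]
      _ = ∑ ℓ, ∑ i, q i ℓ * d i := Finset.sum_comm
      _ = 0 := by simp [hAd]
  -- choose a small ε
  have hFne : F.Nonempty := Finset.card_pos.mp (by omega)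
  obtain ⟨ε, hεpos, hε⟩ : ∃ ε > 0, ∀ i ∈ F, ε * |d i| ≤ min (x i) (1 - x i) := by
    refine ⟨F.inf' hFne (fun i => min (x i) (1 - x i) / (|d i| + 1)), ?_, ?_⟩
    · rw [gt_iff_lt, Finset.lt_inf'_iff]
      intro i hi
      obtain ⟨h1, h2⟩ := hFmem i hi
      have : 0 < min (x i) (1 - x i) := lt_min h1 (by linarith)
      positivity
    · intro i hi
      have hle : F.inf' hFne (fun i => min (x i) (1 - x i) / (|d i| + 1))
          ≤ min (x i) (1 - x i) / (|d i| + 1) := Finset.inf'_le _ hi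
      have hd0 : (0:ℝ) ≤ |d i| := abs_nonneg _
      obtain ⟨h1, h2⟩ := hFmem i hi
      have hmin : 0 < min (x i) (1 - x i) := lt_min h1 (by linarith)
      have := mul_le_mul_of_nonneg_right hle hd0
      have hkey : min (x i) (1 - x i) / (|d i| + 1) * |d i| ≤ min (x i) (1 - x i) := by
        rw [div_mul_eq_mul_div, div_le_iff₀ (by linarith)]
        nlinarith
      linarith
  -- the two perturbed points
  have hxP := hx.1
  rw [hP] at hxP
  obtain ⟨hbd, hs, hg⟩ := hxP
  have hmem : ∀ (s : ℝ), |s| = 1 → (fun i => x i + s * ε * d i) ∈ P := by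
    intro s hs1
    rw [hP]
    refine ⟨?_, ?_, ?_⟩
    · intro i
      by_cases hi : i ∈ F
      · obtain ⟨h1, h2⟩ := hFmem i hi
        have hεd := hε i hi
        have habs : |s * ε * d i| ≤ ε * |d i| := by
          rw [abs_mul, abs_mul, hs1, one_mul, abs_of_pos hεpos]
        have h3 : -(ε * |d i|) ≤ s * ε * d i := by
          have := neg_abs_le (s * ε * d i); linarith
        have h4 : s * ε * d i ≤ ε * |d i| := le_trans (le_abs_self _) habs
        have hml := min_le_left (x i) (1 - x i)
        have hmr := min_le_right (x i) (1 - x i)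
        refine ⟨?_, ?_⟩
        · show 0 ≤ x i + s * ε * d i
          linarith
        · show x i + s * ε * d i ≤ 1
          linarith
      · show 0 ≤ x i + s * ε * d i ∧ x i + s * ε * d i ≤ 1
        rw [hd_out i hi, mul_zero, add_zero]
        exact hbd i
    · have : ∑ i, (x i + s * ε * d i) = ∑ i, x i + s * ε * ∑ i, d i := by
        rw [Finset.mul_sum, ← Finset.sum_add_distrib]
      rw [this, hsumd, mul_zero, add_zero, hs]
    · intro ℓ
      have : ∑ i, q i ℓ * (x i + s * ε * d i)
          = ∑ i, q i ℓ * x i + s * ε * ∑ i, q i ℓ * d i := by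
        rw [Finset.mul_sum, ← Finset.sum_add_distrib]
        apply Finset.sum_congr rfl
        intro i _; ring
      rw [this, hAd ℓ, mul_zero, add_zero]
      exact hg ℓ
  have hy1 : (fun i => x i + 1 * ε * d i) ∈ P := hmem 1 (by norm_num)
  have hy2 : (fun i => x i + (-1) * ε * d i) ∈ P := hmem (-1) (by norm_num)
  have hseg : x ∈ openSegment ℝ (fun i => x i + 1 * ε * d i) (fun i => x i + (-1) * ε * d i) := by
    refine ⟨1/2, 1/2, by norm_num, by norm_num, by norm_num, ?_⟩
    funext i
    simp only [Pi.add_apply, Pi.smul_apply, smul_eq_mul]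
    ring
  have heq := hx.2 hy1 hy2 hseg
  obtain ⟨j, hj⟩ := Function.ne_iff.mp hvne
  have hdj : d (j : Fin m) = v j := by simp [hddef, j.2]
  have := congrFun heq (j : Fin m)
  simp only [hdj, one_mul] at this
  have : ε * v j = 0 := by linarith [this]
  rcases mul_eq_zero.mp this with h | h
  · exact absurd h (ne_of_gt hεpos)
  · exact hj h
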